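/- Let A be a symmetric linear endomorphism of E having at least one positive and at least one negative eigenvalue and no zero eigenvalue. Let U be the sum of the eigenspaces of A corresponding to positive eigenvalues, let m₊(A) be the smallest positive eigenvalue of A, and let m₋(A) be the smallest positive eigenvalue of −A. Let V ⊆ E be a subspace with dim U ≤ dim V and U ∩ V⊥ = 0, and let M : U → U⊥ be the slope of the pair (U,V), i.e., the unique linear map with P_V(U) = { u + M u : u ∈ U }. Then for every t ≥ 0 one has δ(U, exp(tA)·V) ≤ e^{−(m₊(A) + m₋(A)) t} ‖M‖. -/

import Mathlib

open Module Submodule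

noncomputable section

variable {E : Type*} [NormedAddCommGroup E] [InnerProductSpace ℝ E] [FiniteDimensional ℝ E]

/-- The orthogonal projection onto a subspace `U`, viewed as a continuous linear
endomorphism of `E`. -/
noncomputable def projCLM (U : Submodule ℝ E) : E →L[ℝ] E :=
  U.subtypeL.comp (orthogonalProjection U)

/-- The gap `δ(U,V) := ‖P_U - P_V ∘ P_U‖` between two subspaces. -/
noncomputable def gap (U V : Submodule ℝ E) : ℝ :=
  ‖projCLM U - (projCLM V).comp (projCLM U)‖

/-- The exponential of a continuous linear endomorphism. -/
noncomputable def expEnd {V : Type*} [NormedAddCommGroup V] [NormedSpace ℝ V]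
    (B : V →L[ℝ] V) : V →L[ℝ] V :=
  NormedSpace.exp B

/-- The sum of the eigenspaces of `A` corresponding to positive eigenvalues. -/
noncomputable def posSpace (A : E →L[ℝ] E) : Submodule ℝ E :=
  ⨆ μ ∈ Set.Ioi (0 : ℝ), Module.End.eigenspace (A : E →ₗ[ℝ] E) μ

open Nat in
private lemma exp_apply_eigen (A : E →L[ℝ] E) (μ : ℝ) (v : E) (hv : A v = μ • v) :
    NormedSpace.exp A v = Real.exp μ • v := by
  have hpow : ∀ n : ℕ, (A ^ n) v = μ ^ n • v := by
    intro n
    induction n with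
    | zero => simp
    | succ n ih =>
      rw [pow_succ, ContinuousLinearMap.mul_apply, hv, map_smul, ih, smul_smul, mul_comm, ← pow_succ]
  have hsum : Summable fun n : ℕ => (n ! : ℝ)⁻¹ • A ^ n :=
    NormedSpace.expSeries_summable' A
  have h1 : NormedSpace.exp A v = ∑' n : ℕ, ((n ! : ℝ)⁻¹ • A ^ n) v := by
    rw [NormedSpace.exp_eq_tsum ℝ]
    exact ((ContinuousLinearMap.apply ℝ E v).map_tsum hsum)
  rw [h1]
  have h2 : ∀ n : ℕ, ((n ! : ℝ)⁻¹ • A ^ n) v = (μ ^ n / n !) • v := by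
    intro n
    rw [ContinuousLinearMap.smul_apply, hpow, smul_smul]
    congr 1
    field_simp
  simp_rw [h2]
  rw [(Real.summable_pow_div_factorial μ).tsum_smul_const]
  congr 1
  rw [Real.exp_eq_exp_ℝ, NormedSpace.exp_eq_tsum_div]



open scoped RealInnerProductSpace

/-- Let `A` be a symmetric endomorphism of `E` with at least one positive and one negative
eigenvalue and no zero eigenvalue, `U` the sum of the eigenspaces for positive eigenvalues,
`m₊(A)` and `m₋(A)` the smallest positive eigenvalues of `A` and `−A`.  If `V` is a subspace
with `dim U ≤ dim V` and `U ∩ V⊥ = 0`, and `M : U → U⊥` is the slope of `(U,V)`, then for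
all `t ≥ 0`, `δ(U, exp(tA)V) ≤ e^{−(m₊(A)+m₋(A))t} ‖M‖`. -/
theorem gap_exp_flow_decay (A : E →L[ℝ] E) (hA : IsSelfAdjoint A)
    (hpos : ∃ μ : ℝ, 0 < μ ∧ Module.End.HasEigenvalue (A : E →ₗ[ℝ] E) μ)
    (hneg : ∃ μ : ℝ, μ < 0 ∧ Module.End.HasEigenvalue (A : E →ₗ[ℝ] E) μ)
    (hzero : ¬ Module.End.HasEigenvalue (A : E →ₗ[ℝ] E) 0)
    (mp mm : ℝ)
    (hmp : IsLeast {μ : ℝ | 0 < μ ∧ Module.End.HasEigenvalue (A : E →ₗ[ℝ] E) μ} mp)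
    (hmm : IsLeast {μ : ℝ | 0 < μ ∧ Module.End.HasEigenvalue (-(A : E →ₗ[ℝ] E)) μ} mm)
    (V : Submodule ℝ E)
    (hdim : finrank ℝ (posSpace A) ≤ finrank ℝ V)
    (htrans : posSpace A ⊓ Vᗮ = ⊥)
    (M : ↥(posSpace A) →L[ℝ] ↥(posSpace A)ᗮ)
    (hM : Submodule.map (projCLM V : E →ₗ[ℝ] E) (posSpace A)
        = LinearMap.range (((posSpace A).subtypeL + (posSpace A)ᗮ.subtypeL.comp M : ↥(posSpace A) →L[ℝ] E) :
          ↥(posSpace A) →ₗ[ℝ] E))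
    (t : ℝ) (ht : 0 ≤ t) :
    gap (posSpace A) (Submodule.map (expEnd (t • A) : E →ₗ[ℝ] E) V)
      ≤ Real.exp (-(mp + mm) * t) * ‖M‖ := by
  classical
  have hT : (A : E →ₗ[ℝ] E).IsSymmetric := hA.isSymmetric
  have hn : finrank ℝ E = finrank ℝ E := rfl
  set b : OrthonormalBasis (Fin (finrank ℝ E)) ℝ E := hT.eigenvectorBasis hn with hb
  set μ : Fin (finrank ℝ E) → ℝ := hT.eigenvalues hn with hμ
  -- basic facts about the eigenbasis
  have hbev : ∀ i, A (b i) = μ i • b i := fun i => hT.apply_eigenvectorBasis hn i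
  have hbmem : ∀ i, b i ∈ Module.End.eigenspace (A : E →ₗ[ℝ] E) (μ i) :=
    fun i => (hT.hasEigenvector_eigenvectorBasis hn i).1
  have hbeig : ∀ i, Module.End.HasEigenvalue (A : E →ₗ[ℝ] E) (μ i) :=
    fun i => hT.hasEigenvalue_eigenvalues hn i
  have hμne : ∀ i, μ i ≠ 0 := fun i h => hzero (h ▸ hbeig i)
  have hμpos : ∀ i, 0 < μ i → mp ≤ μ i := fun i h => hmp.2 ⟨h, hbeig i⟩
  have hμneg : ∀ i, μ i < 0 → μ i ≤ -mm := by
    intro i h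
    have heq : Module.End.eigenspace (-(A : E →ₗ[ℝ] E)) (-μ i)
        = Module.End.eigenspace (A : E →ₗ[ℝ] E) (μ i) := by
      ext x
      simp only [Module.End.mem_eigenspace_iff, LinearMap.neg_apply, neg_smul, neg_inj]
    have : Module.End.HasEigenvalue (-(A : E →ₗ[ℝ] E)) (-μ i) := by
      rw [Module.End.hasEigenvalue_iff, heq]
      exact Module.End.hasEigenvalue_iff.1 (hbeig i)
    have := hmm.2 ⟨by linarith, this⟩
    linarith
  -- coordinates
  have hcoord : ∀ x : E, ∑ i, ⟪b i, x⟫ • b i = x := fun x => b.sum_repr' x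
  have hnormsq : ∀ x : E, ‖x‖ ^ 2 = ∑ i, ⟪b i, x⟫ ^ 2 := by
    intro x
    rw [← real_inner_self_eq_norm_sq, ← b.sum_inner_mul_inner x x]
    refine Finset.sum_congr rfl fun i _ => ?_
    rw [real_inner_comm x (b i), sq]
  have hinner_sum : ∀ x y : E, ⟪x, y⟫ = ∑ i, ⟪b i, x⟫ * ⟪b i, y⟫ := by
    intro x y
    rw [← b.sum_inner_mul_inner x y]
    refine Finset.sum_congr rfl fun i _ => ?_
    rw [real_inner_comm x (b i)]
  -- action of exp on coordinates
  have hexp : ∀ (s : ℝ) (x : E) (i : Fin (finrank ℝ E)),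
      ⟪b i, expEnd (s • A) x⟫ = Real.exp (s * μ i) * ⟪b i, x⟫ := by
    intro s x i
    have hx : expEnd (s • A) x = ∑ j, ⟪b j, x⟫ • (Real.exp (s * μ j) • b j) := by
      conv_lhs => rw [← hcoord x]
      rw [map_sum]
      refine Finset.sum_congr rfl fun j _ => ?_
      rw [map_smul]
      congr 1
      exact exp_apply_eigen (s • A) (s * μ j) (b j)
        (by rw [ContinuousLinearMap.smul_apply, hbev, smul_smul])
    rw [hx, inner_sum]
    rw [Finset.sum_eq_single i]
    · rw [real_inner_smul_right, real_inner_smul_right, real_inner_self_eq_norm_sq,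
        b.orthonormal.1 i]
      ring
    · intro j _ hj
      rw [real_inner_smul_right, real_inner_smul_right, b.orthonormal.2 (Ne.symm hj),
        mul_zero, mul_zero]
    · intro h; exact absurd (Finset.mem_univ i) h
  -- membership characterizations
  have hUmem : ∀ x : E, x ∈ posSpace A ↔ ∀ i, μ i ≤ 0 → ⟪b i, x⟫ = 0 := by
    intro x
    constructor
    · intro hx i hi
      have hbortho : b i ∈ (posSpace A)ᗮ := by
        rw [posSpace, iSup_subtype', ← Submodule.iInf_orthogonal]
        refine Submodule.mem_iInf _ |>.2 fun ν => ?_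
        rw [Submodule.mem_orthogonal]
        intro y hy
        have hne : (ν : ℝ) ≠ μ i := fun h => absurd (h ▸ ν.2) (by simp; linarith)
        exact hT.orthogonalFamily_eigenspaces hne ⟨y, hy⟩ ⟨b i, hbmem i⟩
      have := (Submodule.mem_orthogonal _ _).1 hbortho x hx
      rwa [real_inner_comm] at this
    · intro h
      rw [← hcoord x]
      refine Submodule.sum_mem _ fun i _ => ?_
      rcases le_or_gt (μ i) 0 with hi | hi
      · rw [h i hi]; simp
      · exact Submodule.smul_mem _ _
          (Submodule.mem_iSup_of_mem (μ i) (Submodule.mem_iSup_of_mem hi (hbmem i)))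
  have hUperpmem : ∀ x : E, x ∈ (posSpace A)ᗮ ↔ ∀ i, 0 < μ i → ⟪b i, x⟫ = 0 := by
    intro x
    constructor
    · intro hx i hi
      exact (Submodule.mem_orthogonal _ _).1 hx (b i)
        (Submodule.mem_iSup_of_mem (μ i) (Submodule.mem_iSup_of_mem hi (hbmem i)))
    · intro h
      rw [Submodule.mem_orthogonal]
      intro u hu
      rw [hinner_sum]
      refine Finset.sum_eq_zero fun i _ => ?_
      rcases le_or_gt (μ i) 0 with hi | hi
      · rw [(hUmem u).1 hu i hi, zero_mul]
      · rw [h i hi, mul_zero]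
  -- norm estimate
  have hnorm_le : ∀ (s : ℝ) (x : E) (r : ℝ), 0 ≤ r →
      (∀ i, ⟪b i, x⟫ ≠ 0 → Real.exp (s * μ i) ≤ r) → ‖expEnd (s • A) x‖ ≤ r * ‖x‖ := by
    intro s x r hr h
    have hsq : ‖expEnd (s • A) x‖ ^ 2 ≤ (r * ‖x‖) ^ 2 := by
      rw [hnormsq, mul_pow, hnormsq x, Finset.mul_sum]
      refine Finset.sum_le_sum fun i _ => ?_
      rw [hexp s x i, mul_pow]
      rcases eq_or_ne (⟪b i, x⟫) 0 with h0 | h0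
      · rw [h0]; simp
      · have h1 := h i h0
        have h2 : (0:ℝ) ≤ Real.exp (s * μ i) := (Real.exp_pos _).le
        have : Real.exp (s * μ i) ^ 2 ≤ r ^ 2 := by nlinarith
        nlinarith [sq_nonneg (⟪b i, x⟫)]
    exact le_of_pow_le_pow_left₀ two_ne_zero (mul_nonneg hr (norm_nonneg x)) hsq
  -- exp(tA) ∘ exp(-tA) = id
  have hcomp : ∀ z : E, expEnd (t • A) (expEnd ((-t) • A) z) = z := by
    intro z
    have hc : Commute (t • A) ((-t) • A) := by
      show (t • A) * ((-t) • A) = ((-t) • A) * (t • A)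
      ext w
      simp only [ContinuousLinearMap.mul_apply, ContinuousLinearMap.smul_apply, map_smul,
        smul_smul]
      rw [mul_comm]
    have h0 : t • A + (-t) • A = 0 := by rw [neg_smul]; abel
    have key : NormedSpace.exp (t • A) * NormedSpace.exp ((-t) • A) = 1 := by
      have hr : ∀ X : E →L[ℝ] E,
          X ∈ EMetric.ball (0 : E →L[ℝ] E) (NormedSpace.expSeries ℝ (E →L[ℝ] E)).radius := by
        intro X
        rw [NormedSpace.expSeries_radius_eq_top ℝ (E →L[ℝ] E)]
        exact edist_lt_top _ _
      rw [← NormedSpace.exp_add_of_commute_of_mem_ball (𝕂 := ℝ) hc (hr _) (hr _), h0,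
        NormedSpace.exp_zero]
    have := congrArg (fun (B : E →L[ℝ] E) => B z) key
    simpa [expEnd, ContinuousLinearMap.mul_apply] using this
  -- main estimate
  set W : Submodule ℝ E := Submodule.map (expEnd (t • A) : E →ₗ[ℝ] E) V with hWdef
  set C : ℝ := Real.exp (-(mp + mm) * t) * ‖M‖ with hCdef
  have hC0 : 0 ≤ C := mul_nonneg (Real.exp_pos _).le (norm_nonneg M)
  rw [gap]
  refine ContinuousLinearMap.opNorm_le_bound _ hC0 fun x => ?_
  rw [ContinuousLinearMap.sub_apply, ContinuousLinearMap.comp_apply]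
  set y : E := projCLM (posSpace A) x with hydef
  have hyU : y ∈ posSpace A := by
    simp only [hydef, projCLM, ContinuousLinearMap.comp_apply, Submodule.subtypeL_apply]
    exact Submodule.coe_mem _
  have hyx : ‖y‖ ≤ ‖x‖ := by
    have h1 : ‖orthogonalProjection (posSpace A) x‖ ≤ ‖orthogonalProjection (posSpace A)‖ * ‖x‖ :=
      (orthogonalProjection (posSpace A)).le_opNorm x
    have h2 : ‖orthogonalProjection (posSpace A)‖ * ‖x‖ ≤ 1 * ‖x‖ :=
      mul_le_mul_of_nonneg_right (orthogonalProjection_norm_le (posSpace A)) (norm_nonneg x)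
    calc ‖y‖ = ‖orthogonalProjection (posSpace A) x‖ := rfl
      _ ≤ 1 * ‖x‖ := h1.trans h2
      _ = ‖x‖ := one_mul _
  -- pull back by the flow
  set u : E := expEnd ((-t) • A) y with hudef
  have hu : u ∈ posSpace A := by
    refine (hUmem u).2 fun i hi => ?_
    rw [hudef, hexp, (hUmem y).1 hyU i hi, mul_zero]
  have hun : ‖u‖ ≤ Real.exp ((-t) * mp) * ‖y‖ := by
    refine hnorm_le (-t) y _ (Real.exp_pos _).le fun i hi => ?_
    have h1 : 0 < μ i := by
      by_contra h'
      exact hi ((hUmem y).1 hyU i (le_of_not_gt h'))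
    have h2 : mp ≤ μ i := hμpos i h1
    exact Real.exp_le_exp.2 (by nlinarith)
  -- the point of V over u
  set w0 : E := u + ↑(M ⟨u, hu⟩) with hw0def
  have hw0V : w0 ∈ V := by
    have hmem : w0 ∈ Submodule.map (projCLM V : E →ₗ[ℝ] E) (posSpace A) := by
      rw [hM]
      refine ⟨⟨u, hu⟩, ?_⟩
      simp [hw0def]
    obtain ⟨z, -, hz⟩ := hmem
    rw [← hz]
    simp only [projCLM, ContinuousLinearMap.comp_apply, Submodule.subtypeL_apply]
    exact Submodule.coe_mem _
  set w : E := expEnd (t • A) w0 with hwdef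
  have hwW : w ∈ W := Submodule.mem_map_of_mem hw0V
  have hw : w = y + expEnd (t • A) ↑(M ⟨u, hu⟩) := by
    rw [hwdef, hw0def, map_add]
    congr 1
    rw [hudef]
    exact hcomp y
  -- norm of the correction term
  have hMu : (↑(M ⟨u, hu⟩) : E) ∈ (posSpace A)ᗮ := (M ⟨u, hu⟩).2
  have hMun : ‖expEnd (t • A) ↑(M ⟨u, hu⟩)‖ ≤ Real.exp (t * (-mm)) * ‖(↑(M ⟨u, hu⟩) : E)‖ := by
    refine hnorm_le t _ _ (Real.exp_pos _).le fun i hi => ?_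
    have h1 : μ i ≤ 0 := by
      by_contra h'
      exact hi ((hUperpmem _).1 hMu i (lt_of_not_ge h'))
    have h2 : μ i ≤ -mm := hμneg i (lt_of_le_of_ne h1 (hμne i))
    exact Real.exp_le_exp.2 (by nlinarith)
  have hMnorm : ‖(↑(M ⟨u, hu⟩) : E)‖ ≤ ‖M‖ * ‖u‖ := by
    have h := M.le_opNorm ⟨u, hu⟩
    simpa using h
  -- minimality of orthogonal projection
  have hmin : ‖y - projCLM W y‖ ≤ ‖y - w‖ := by
    have : ‖y - projCLM W y‖ = ⨅ z : W, ‖y - z‖ := starProjection_minimal y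
    rw [this]
    refine ciInf_le_of_le ⟨0, ?_⟩ (⟨w, hwW⟩ : W) le_rfl
    rintro a ⟨i, rfl⟩
    exact norm_nonneg _
  have hfinal : ‖y - w‖ ≤ C * ‖y‖ := by
    rw [hw]
    have : y - (y + expEnd (t • A) ↑(M ⟨u, hu⟩)) = -(expEnd (t • A) ↑(M ⟨u, hu⟩)) := by abel
    rw [this, norm_neg]
    have hexp0 : (0:ℝ) ≤ Real.exp (t * (-mm)) := (Real.exp_pos _).le
    calc ‖expEnd (t • A) ↑(M ⟨u, hu⟩)‖
        ≤ Real.exp (t * (-mm)) * ‖(↑(M ⟨u, hu⟩) : E)‖ := hMun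
      _ ≤ Real.exp (t * (-mm)) * (‖M‖ * ‖u‖) :=
          mul_le_mul_of_nonneg_left hMnorm hexp0
      _ ≤ Real.exp (t * (-mm)) * (‖M‖ * (Real.exp ((-t) * mp) * ‖y‖)) := by
          refine mul_le_mul_of_nonneg_left (mul_le_mul_of_nonneg_left hun (norm_nonneg M)) hexp0
      _ = C * ‖y‖ := by
          rw [hCdef]
          rw [show Real.exp (-(mp + mm) * t) = Real.exp (t * (-mm)) * Real.exp ((-t) * mp) by
            rw [← Real.exp_add]; ring_nf]
          ring
  calc ‖y - projCLM W y‖ ≤ C * ‖y‖ := hmin.trans hfinal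
    _ ≤ C * ‖x‖ := mul_le_mul_of_nonneg_left hyx hC0
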